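/- arXiv:2007.09950 — 4 statements merged into one kernel-verified Lean document; each statement's English description precedes it below -/
import Mathlib

section
/- Let R be a commutative ring, n ≥ 2, and f, g₁, g₂, …, gₙ ∈ R. Assume that the sequence f, g₂, g₃, …, gₙ is a regular sequence on R. If a₂, …, aₙ ∈ R satisfy a₂·g₂ + a₃·g₃ + ⋯ + aₙ·gₙ ∈ (f), then the vector (0, a₂, …, aₙ) ∈ Rⁿ belongs to the submodule T of Rⁿ generated by the vectors f·eᵢ (1 ≤ i ≤ n) and gⱼ·eᵢ − gᵢ·eⱼ (1 ≤ i < j ≤ n), where e₁, …, eₙ is the standard basis of Rⁿ. -/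
lemma stmt_1_aux_get {R : Type*} {n : ℕ} (f : R) (g : Fin n → R) (k : ℕ) (h : k < n)
    (hk : 1 ≤ k) (hlen : k < (f :: ((List.finRange n).drop 1).map g).length) :
    (f :: ((List.finRange n).drop 1).map g)[k] = g ⟨k, h⟩ := by
  obtain ⟨j, rfl⟩ : ∃ j, k = j + 1 := ⟨k - 1, by omega⟩
  rw [List.getElem_cons_succ, List.getElem_map, List.getElem_drop, List.getElem_finRange]
  exact congrArg g (Fin.ext (by simp [Nat.add_comm]))

set_option maxHeartbeats 1000000 in
lemma stmt_1_main {R : Type*} [CommRing R] {n : ℕ} (f : R) (g : Fin n → R)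
    (L : List R) (hlen : L.length = n) (npos : 0 < n)
    (hgetf : ∀ (h : 0 < L.length), L[0] = f)
    (hget : ∀ k (h : k < n) (h' : k < L.length), 1 ≤ k → L[k] = g ⟨k, h⟩)
    (hreg : RingTheory.Sequence.IsWeaklyRegular R L)
    (Z : Fin n) (hZval : Z.1 = 0) :
    ∀ (m : ℕ) (a : Fin n → R), a Z = 0 → (∀ i : Fin n, m ≤ i.1 → a i = 0) →
      (∑ i ∈ Finset.univ.erase Z, a i * g i ∈ Ideal.span {f}) →
      a ∈ Submodule.span R
        ({v : Fin n → R | ∃ i : Fin n, v = Pi.single i f} ∪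
          {v : Fin n → R | ∃ i j : Fin n, i < j ∧
            v = Pi.single i (g j) - Pi.single j (g i)}) := by
  have hfmem : ∀ m, 1 ≤ m → f ∈ Ideal.ofList (L.take m) := by
    intro m hm
    refine Ideal.subset_span ?_
    show f ∈ L.take m
    rw [List.mem_take_iff_getElem]
    exact ⟨0, lt_inf_iff.mpr ⟨hm, by omega⟩, hgetf _⟩
  have hgmem : ∀ m (i : Fin n), 1 ≤ i.1 → i.1 < m → g i ∈ Ideal.ofList (L.take m) := by
    intro m i h1 h2
    refine Ideal.subset_span ?_
    show g i ∈ L.take m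
    rw [List.mem_take_iff_getElem]
    refine ⟨i.1, lt_inf_iff.mpr ⟨h2, by omega⟩, ?_⟩
    exact hget i.1 i.2 (by omega) h1
  have hmemrev : ∀ m, m ≤ n → ∀ r ∈ L.take m,
      r = f ∨ ∃ i : Fin n, 1 ≤ i.1 ∧ i.1 < m ∧ r = g i := by
    intro m hm r hr
    rw [List.mem_take_iff_getElem] at hr
    obtain ⟨k, hk, rfl⟩ := hr
    rw [lt_inf_iff, hlen] at hk
    rcases Nat.eq_zero_or_pos k with rfl | hk1
    · left; exact hgetf _
    · right
      exact ⟨⟨k, hk.2⟩, hk1, hk.1, hget k hk.2 (by omega) hk1⟩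
  have hregm : ∀ m (hm : 1 ≤ m) (hm' : m < n) (x : R),
      x * g ⟨m, hm'⟩ ∈ Ideal.ofList (L.take m) → x ∈ Ideal.ofList (L.take m) := by
    intro m hm hm' x hx
    have hr := hreg.regular_mod_prev m (by omega)
    rw [hget m hm' (by omega) hm] at hr
    have heq : (Ideal.ofList (L.take m) • ⊤ : Submodule R R) = Ideal.ofList (L.take m) := by
      rw [smul_eq_mul, Ideal.mul_top]
    rw [heq] at hr
    have hz : (Submodule.Quotient.mk x :
        R ⧸ (Ideal.ofList (L.take m) : Submodule R R)) = 0 := by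
      refine hr ?_
      show g ⟨m, hm'⟩ • (Submodule.Quotient.mk x :
        R ⧸ (Ideal.ofList (L.take m) : Submodule R R)) = g ⟨m, hm'⟩ • 0
      rw [smul_zero, ← Submodule.Quotient.mk_smul, Submodule.Quotient.mk_eq_zero]
      simpa [smul_eq_mul, mul_comm] using hx
    rwa [Submodule.Quotient.mk_eq_zero] at hz
  intro m
  induction m with
  | zero =>
    intro a _ hsupp _
    have : a = 0 := funext fun i => hsupp i (Nat.zero_le _)
    rw [this]; exact zero_mem _
  | succ m ih =>
    intro a ha0 hsupp hsum
    rcases Nat.eq_zero_or_pos m with rfl | hm1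
    · have : a = 0 := by
        funext i
        rcases Nat.eq_zero_or_pos i.1 with h | h
        · have : i = Z := Fin.ext (by omega)
          rw [this]; exact ha0
        · exact hsupp i h
      rw [this]; exact zero_mem _
    rcases Nat.lt_or_ge m n with hmn | hmn
    swap
    · exact ih a ha0 (fun i hi => absurd i.2 (by omega)) hsum
    -- main case: 1 ≤ m < n
    obtain ⟨μ, hμval⟩ : ∃ μ : Fin n, μ.1 = m := ⟨⟨m, hmn⟩, rfl⟩
    have hμZ : μ ≠ Z := fun h => by rw [h] at hμval; omega
    have hμmem : μ ∈ Finset.univ.erase Z := Finset.mem_erase.mpr ⟨hμZ, Finset.mem_univ _⟩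
    have hsplit : ∑ i ∈ Finset.univ.erase Z, a i * g i
        = a μ * g μ + ∑ i ∈ (Finset.univ.erase Z).erase μ, a i * g i :=
      (Finset.add_sum_erase _ _ hμmem).symm
    have hIf : Ideal.span {f} ≤ Ideal.ofList (L.take m) := by
      rw [Ideal.span_le, Set.singleton_subset_iff]
      exact hfmem m hm1
    have hstep1 : a μ * g μ ∈ Ideal.ofList (L.take m) := by
      have hrest : ∑ i ∈ (Finset.univ.erase Z).erase μ, a i * g i
          ∈ Ideal.ofList (L.take m) := by
        refine Submodule.sum_mem _ fun i hi => ?_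
        rw [Finset.mem_erase, Finset.mem_erase] at hi
        rcases Nat.lt_or_ge i.1 m with h | h
        · have h1 : 1 ≤ i.1 := by
            rcases Nat.eq_zero_or_pos i.1 with h' | h'
            · exact absurd (Fin.ext (by omega)) hi.2.1
            · exact h'
          exact Ideal.mul_mem_left _ _ (hgmem m i h1 h)
        · have : i.1 ≠ m := fun h' => hi.1 (Fin.ext (by omega))
          rw [hsupp i (by omega), zero_mul]
          exact zero_mem _
      have := sub_mem (hIf hsum) hrest
      rw [hsplit, add_sub_cancel_right] at this
      exact this
    have hstep2 : a μ ∈ Ideal.ofList (L.take m) := by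
      refine hregm m hm1 hmn _ ?_
      have : (⟨m, hmn⟩ : Fin n) = μ := Fin.ext (by rw [hμval])
      rw [this]; exact hstep1
    have hclaim : ∀ x ∈ Ideal.ofList (L.take m), ∃ b : Fin n → R,
        b Z = 0 ∧ (∀ i : Fin n, m ≤ i.1 → b i = 0) ∧
        Pi.single μ x + b ∈ Submodule.span R
          ({v : Fin n → R | ∃ i : Fin n, v = Pi.single i f} ∪
            {v : Fin n → R | ∃ i j : Fin n, i < j ∧
              v = Pi.single i (g j) - Pi.single j (g i)}) ∧
        x * g μ + ∑ i ∈ Finset.univ.erase Z, b i * g i ∈ Ideal.span {f} := by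
      intro x hx
      refine Submodule.span_induction ?_ ?_ ?_ ?_ hx
      · intro r hr
        rcases hmemrev m (by omega) r hr with rfl | ⟨i, hi1, hi2, rfl⟩
        · refine ⟨0, rfl, fun _ _ => rfl, ?_, ?_⟩
          · rw [add_zero]
            exact Submodule.subset_span (Or.inl ⟨μ, rfl⟩)
          · have h1 : ∑ i ∈ Finset.univ.erase Z, (0 : Fin n → R) i * g i = 0 :=
              Finset.sum_eq_zero fun i _ => by rw [Pi.zero_apply, zero_mul]
            rw [h1, add_zero]
            exact Ideal.mul_mem_right (g μ) _ (Ideal.subset_span rfl)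
        · have hiμ : i < μ := by rw [Fin.lt_def]; omega
          have hiZ : i ≠ Z := fun h => by rw [h] at hi1; omega
          refine ⟨Pi.single i (-(g μ)), ?_, ?_, ?_, ?_⟩
          · exact Pi.single_eq_of_ne (Ne.symm hiZ) _
          · intro j hj
            have hji : j ≠ i := fun h => by rw [h] at hj; omega
            exact Pi.single_eq_of_ne hji _
          · have : (Pi.single μ (g i) + Pi.single i (-(g μ)) : Fin n → R)
                = -(Pi.single i (g μ) - Pi.single μ (g i)) := by
              rw [Pi.single_neg]; abel
            rw [this]
            exact neg_mem (Submodule.subset_span (Or.inr ⟨i, μ, hiμ, rfl⟩))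
          · have hsum0 : ∑ j ∈ Finset.univ.erase Z, (Pi.single i (-(g μ)) : Fin n → R) j * g j
                = -(g μ) * g i := by
              rw [Finset.sum_eq_single i]
              · rw [Pi.single_eq_same]
              · intro j _ hji
                rw [Pi.single_eq_of_ne hji, zero_mul]
              · intro h
                exact absurd (Finset.mem_erase.mpr ⟨hiZ, Finset.mem_univ _⟩) h
            rw [hsum0]
            have : g i * g μ + -(g μ) * g i = 0 := by ring
            rw [this]; exact zero_mem _
      · refine ⟨0, rfl, fun _ _ => rfl, ?_, ?_⟩
        · rw [Pi.single_zero, zero_add]; exact zero_mem _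
        · have h1 : ∑ i ∈ Finset.univ.erase Z, (0 : Fin n → R) i * g i = 0 :=
            Finset.sum_eq_zero fun i _ => by rw [Pi.zero_apply, zero_mul]
          rw [h1, zero_mul, add_zero]; exact zero_mem _
      · rintro x y _ _ ⟨bx, hbx0, hbxs, hbxT, hbxf⟩ ⟨by', hby0, hbys, hbyT, hbyf⟩
        refine ⟨bx + by', by simp [hbx0, hby0], fun i hi => by simp [hbxs i hi, hbys i hi],
          ?_, ?_⟩
        · have : Pi.single μ (x + y) + (bx + by')
              = (Pi.single μ x + bx) + (Pi.single μ y + by') := by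
            rw [Pi.single_add]; abel
          rw [this]; exact add_mem hbxT hbyT
        · have : (x + y) * g μ + ∑ i ∈ Finset.univ.erase Z, (bx + by') i * g i
              = (x * g μ + ∑ i ∈ Finset.univ.erase Z, bx i * g i)
                + (y * g μ + ∑ i ∈ Finset.univ.erase Z, by' i * g i) := by
            rw [show ∑ i ∈ Finset.univ.erase Z, (bx + by') i * g i
                = ∑ i ∈ Finset.univ.erase Z, (bx i * g i + by' i * g i) from
              Finset.sum_congr rfl fun i _ => by simp [add_mul]]
            rw [Finset.sum_add_distrib]
            ring
          rw [this]; exact add_mem hbxf hbyf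
      · rintro r x _ ⟨bx, hbx0, hbxs, hbxT, hbxf⟩
        refine ⟨r • bx, by simp [hbx0], fun i hi => by simp [hbxs i hi], ?_, ?_⟩
        · have : Pi.single μ (r • x) + r • bx = r • (Pi.single μ x + bx) := by
            rw [Pi.single_smul, smul_add]
          rw [this]; exact Submodule.smul_mem _ _ hbxT
        · have : r • x * g μ + ∑ i ∈ Finset.univ.erase Z, (r • bx) i * g i
              = r * (x * g μ + ∑ i ∈ Finset.univ.erase Z, bx i * g i) := by
            rw [mul_add, Finset.mul_sum]
            congr 1
            · rw [smul_eq_mul]; ring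
            · refine Finset.sum_congr rfl fun i _ => ?_
              simp only [Pi.smul_apply, smul_eq_mul]; ring
          rw [this]
          exact Ideal.mul_mem_left _ _ hbxf
    obtain ⟨b, hb0, hbs, hbT, hbf⟩ := hclaim (a μ) hstep2
    obtain ⟨a', ha'⟩ : ∃ a' : Fin n → R, a' = a - (Pi.single μ (a μ) + b) := ⟨_, rfl⟩
    have ha'0 : a' Z = 0 := by
      rw [ha']
      simp [Pi.single_eq_of_ne (Ne.symm hμZ), ha0, hb0]
    have ha's : ∀ i : Fin n, m ≤ i.1 → a' i = 0 := by
      intro i hi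
      rcases Nat.eq_or_lt_of_le hi with h | h
      · have hiμ : i = μ := Fin.ext (by omega)
        rw [ha', hiμ]
        simp [Pi.single_eq_same, hbs μ (le_of_eq hμval.symm)]
      · rw [ha']
        have hiμ : i ≠ μ := fun h' => by rw [h'] at h; omega
        simp [hsupp i (by omega), Pi.single_eq_of_ne hiμ, hbs i (by omega)]
    have ha'sum : ∑ i ∈ Finset.univ.erase Z, a' i * g i ∈ Ideal.span {f} := by
      have hsing : ∑ i ∈ Finset.univ.erase Z, (Pi.single μ (a μ) : Fin n → R) i * g i = a μ * g μ := by
        rw [Finset.sum_eq_single μ]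
        · rw [Pi.single_eq_same]
        · intro j _ hjμ
          rw [Pi.single_eq_of_ne hjμ, zero_mul]
        · intro h; exact absurd hμmem h
      have heq : ∑ i ∈ Finset.univ.erase Z, a' i * g i
          = (∑ i ∈ Finset.univ.erase Z, a i * g i)
            - (a μ * g μ + ∑ i ∈ Finset.univ.erase Z, b i * g i) := by
        rw [← hsing, ← Finset.sum_add_distrib, ← Finset.sum_sub_distrib]
        refine Finset.sum_congr rfl fun i _ => ?_
        rw [ha']
        simp only [Pi.sub_apply, Pi.add_apply]; ring
      rw [heq]
      exact sub_mem hsum hbf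
    have ha'T := ih a' ha'0 ha's ha'sum
    have : a = a' + (Pi.single μ (a μ) + b) := by rw [ha']; abel
    rw [this]
    exact add_mem ha'T hbT

/-- Let `R` be a commutative ring, `n ≥ 2`, and `f, g₁, …, gₙ ∈ R`
(with `g : Fin n → R`, `g ⟨0, _⟩` playing the role of `g₁`).  Assume `f, g₂, …, gₙ` is a
regular sequence on `R`.  If `a = (0, a₂, …, aₙ)` satisfies
`a₂·g₂ + ⋯ + aₙ·gₙ ∈ (f)`, then `a` belongs to the submodule `T` of `Rⁿ` generated by
`f·eᵢ` (for all `i`) and `gⱼ·eᵢ − gᵢ·eⱼ` (for `i < j`). -/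
theorem stmt_1 (R : Type*) [CommRing R] (n : ℕ) (hn : 2 ≤ n) (f : R) (g : Fin n → R)
    (hreg : RingTheory.Sequence.IsRegular R (f :: ((List.finRange n).drop 1).map g))
    (a : Fin n → R) (h0 : a ⟨0, by omega⟩ = 0)
    (hlog : ∑ i ∈ Finset.univ.erase ⟨0, by omega⟩, a i * g i ∈ Ideal.span {f}) :
    a ∈ Submodule.span R
        ({v : Fin n → R | ∃ i : Fin n, v = Pi.single i f} ∪
          {v : Fin n → R | ∃ i j : Fin n, i < j ∧
            v = Pi.single i (g j) - Pi.single j (g i)}) := by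
  have hlen : (f :: ((List.finRange n).drop 1).map g).length = n := by simp; omega
  refine stmt_1_main f g _ hlen (by omega) (fun _ => rfl)
    (fun k h h' hk => stmt_1_aux_get f g k h hk h') hreg.toIsWeaklyRegular
    ⟨0, by omega⟩ rfl n a h0 (fun i hi => absurd i.2 (by omega)) hlog
end

section
/- Let R = ℂ[x, y] be the polynomial ring in two variables over ℂ, f = x² − y³, g₁ = ∂f/∂x = 2x, g₂ = ∂f/∂y = −3y². Let N = {(a₁, a₂) ∈ R² : a₁·g₁ + a₂·g₂ ∈ (f)} and let T ⊆ R² be the submodule generated by (f, 0), (0, f) and (g₂, −g₁) = (−3y², −2x). Then the quotient module N/T is a ℂ-vector space of dimension 2, and the classes of the vectors (3x, 2y) and (3xy, 2y²) form a ℂ-basis of N/T. -/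
open MvPolynomial

/-- The polynomial ring `R = ℂ[x, y]`, with `x = X 0`, `y = X 1`. -/
noncomputable abbrev cuspRing : Type := MvPolynomial (Fin 2) ℂ

/-- `f = x² − y³`. -/
noncomputable def cuspF : cuspRing := X 0 ^ 2 - X 1 ^ 3

/-- `g₁ = ∂f/∂x = 2x`, `g₂ = ∂f/∂y = −3y²`. -/
noncomputable def cuspG : Fin 2 → cuspRing := ![2 * X 0, -3 * X 1 ^ 2]

/-- The module `N = {(a₁, a₂) ∈ R² : a₁·g₁ + a₂·g₂ ∈ (f)}` of logarithmic vectors. -/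
noncomputable def cuspN : Submodule cuspRing (Fin 2 → cuspRing) :=
  Submodule.comap
    (∑ i : Fin 2, cuspG i • (LinearMap.proj i : (Fin 2 → cuspRing) →ₗ[cuspRing] cuspRing))
    (Ideal.span {cuspF})

/-- The trivial submodule `T`, generated by `(f, 0)`, `(0, f)` and `(g₂, −g₁) = (−3y², −2x)`. -/
noncomputable def cuspT : Submodule cuspRing (Fin 2 → cuspRing) :=
  Submodule.span cuspRing {![cuspF, 0], ![0, cuspF], ![cuspG 1, -cuspG 0]}


noncomputable abbrev R2 : Type := MvPolynomial (Fin 2) ℂ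

noncomputable def kx : R2 →ₐ[ℂ] R2 := aeval ![0, X 1]
noncomputable def ky : R2 →ₐ[ℂ] R2 := aeval ![X 0, 0]

lemma kx_dvd (g : R2) : X 0 ∣ g - kx g := by
  induction g using MvPolynomial.induction_on with
  | C a => simp [kx]
  | add p q hp hq =>
      rw [map_add, add_sub_add_comm]
      exact dvd_add hp hq
  | mul_X p n hp =>
    fin_cases n
    · show X 0 ∣ p * X 0 - kx (p * X 0)
      simp only [map_mul, kx, aeval_X, Matrix.cons_val_zero, mul_zero, sub_zero]
      exact dvd_mul_left _ _
    · show X 0 ∣ p * X 1 - kx (p * X 1)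
      simp only [map_mul, kx, aeval_X, Matrix.cons_val_one, Matrix.head_cons, Matrix.cons_val_zero]
      rw [← sub_mul]
      exact hp.mul_right _

lemma ky_dvd (g : R2) : X 1 ∣ g - ky g := by
  induction g using MvPolynomial.induction_on with
  | C a => simp [ky]
  | add p q hp hq =>
      rw [map_add, add_sub_add_comm]
      exact dvd_add hp hq
  | mul_X p n hp =>
    fin_cases n
    · show X 1 ∣ p * X 0 - ky (p * X 0)
      simp only [map_mul, ky, aeval_X, Matrix.cons_val_zero]
      rw [← sub_mul]
      exact hp.mul_right _
    · show X 1 ∣ p * X 1 - ky (p * X 1)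
      simp only [map_mul, ky, aeval_X, Matrix.cons_val_one, Matrix.head_cons, Matrix.cons_val_zero, mul_zero, sub_zero]
      exact dvd_mul_left _ _

lemma kx_idem (g : R2) : kx (kx g) = kx g := by
  have : kx.comp kx = kx := by
    apply MvPolynomial.algHom_ext
    intro i; fin_cases i <;> simp [kx]
  exact congrFun (congrArg (fun h => h.toFun) this) g

lemma ky_kx (g : R2) : ky (kx g) = C (coeff 0 g) := by
  have : ky.comp kx = aeval 0 := by
    apply MvPolynomial.algHom_ext
    intro i; fin_cases i <;> simp [kx, ky]
  have h2 := congrFun (congrArg (fun h => h.toFun) this) g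
  simp only [AlgHom.toFun_eq_coe, AlgHom.coe_comp, Function.comp_apply] at h2
  rw [h2, aeval_zero]
  rfl

lemma X0_ne : (X 0 : R2) ≠ 0 := MvPolynomial.X_ne_zero _
lemma two_X0_ne : (2 * X 0 : R2) ≠ 0 := by
  refine mul_ne_zero ?_ X0_ne
  have : ((2:ℂ) : ℂ) ≠ 0 := two_ne_zero
  simpa using (MvPolynomial.C_ne_zero (σ := Fin 2)).mpr (two_ne_zero (α := ℂ))

lemma memA (p : R2) (h0 : coeff 0 p = 0) (h1 : coeff (Finsupp.single 1 1) p = 0) :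
    ∃ u w : R2, p = u * X 0 + w * X 1 ^ 2 := by
  obtain ⟨u, hu⟩ := kx_dvd p
  have hss : kx (kx p) = kx p := kx_idem p
  have hys : ky (kx p) = 0 := by rw [ky_kx, h0, map_zero]
  obtain ⟨t, ht⟩ := ky_dvd (kx p)
  rw [hys, sub_zero] at ht
  have hp' : p = X 1 * t + X 0 * u := by
    rw [← ht]; linear_combination hu
  have hkt : kx t = t := by
    have h5 : X 1 * kx t = X 1 * t := by
      have := hss
      rw [ht, map_mul] at this
      have hx1 : kx (X 1) = X 1 := by simp [kx]
      rw [hx1] at this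
      rw [this, ← ht]
    exact mul_left_cancel₀ (MvPolynomial.X_ne_zero _) h5
  have hc0t : coeff 0 t = 0 := by
    have hcc := congrArg (coeff (Finsupp.single 1 1)) hp'
    rw [h1] at hcc
    rw [coeff_add] at hcc
    have e1 : coeff (Finsupp.single 1 1) (X 1 * t) = coeff 0 t := by
      have := MvPolynomial.coeff_X_mul (0 : Fin 2 →₀ ℕ) 1 t
      simpa using this
    have e2 : coeff (Finsupp.single 1 1) (X 0 * t) = 0 := by
      rw [MvPolynomial.coeff_X_mul']
      simp [Finsupp.single_eq_of_ne]
    have e2' : coeff (Finsupp.single 1 1) (X 0 * u) = 0 := by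
      rw [MvPolynomial.coeff_X_mul']
      simp [Finsupp.single_eq_of_ne]
    rw [e1, e2'] at hcc
    simpa using hcc.symm
  have hyt : ky t = 0 := by rw [← hkt, ky_kx, hc0t, map_zero]
  obtain ⟨w, hw⟩ := ky_dvd t
  rw [hyt, sub_zero] at hw
  refine ⟨u, w, ?_⟩
  rw [hp', hw]; ring


lemma decomp (a b c : R2) (h : c * (X 0 ^ 2 - X 1 ^ 3) = 2 * X 0 * a - 3 * X 1 ^ 2 * b) :
    ∃ p q : R2, a = 3 * X 0 * p - 3 * X 1 ^ 2 * q ∧ b = 2 * X 1 * p - 2 * X 0 * q := by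
  have hX1 : kx (X 1) = X 1 := by simp [kx]
  have hX0 : kx (X 0) = 0 := by simp [kx]
  have hkh := congrArg kx h
  simp only [map_mul, map_sub, map_pow, map_ofNat, hX0, hX1] at hkh
  -- hkh : kx c * (0^2 - X1^3) = 2*0*kx a - 3*X1^2*kx b
  have h3 : X 1 * kx c = 3 * kx b := by
    have h5 : X 1 ^ 2 * (X 1 * kx c) = X 1 ^ 2 * (3 * kx b) := by linear_combination -hkh
    exact mul_left_cancel₀ (pow_ne_zero 2 (MvPolynomial.X_ne_zero _)) h5
  have h4 : kx (X 1 * c - 3 * b) = 0 := by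
    simp only [map_sub, map_mul, map_ofNat, hX1]
    rw [h3]; ring
  obtain ⟨d, hd⟩ := kx_dvd (X 1 * c - 3 * b)
  rw [h4, sub_zero] at hd
  have key : (2 * X 0) * (3 * X 0 * c - 3 * X 1 ^ 2 * d) = (2 * X 0) * (6 * a) := by
    linear_combination 6 * h + 6 * X 1 ^ 2 * hd
  have key2 : 3 * X 0 * c - 3 * X 1 ^ 2 * d = 6 * a := mul_left_cancel₀ two_X0_ne key
  have keyb : 2 * X 1 * c - 2 * X 0 * d = 6 * b := by linear_combination 2 * hd
  have h6 : (C (6⁻¹ : ℂ) * 6 : R2) = 1 := by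
    rw [show ((6 : R2) = C (6 : ℂ)) from (map_ofNat C 6).symm, ← map_mul]
    norm_num
  refine ⟨(6⁻¹ : ℂ) • c, (6⁻¹ : ℂ) • d, ?_, ?_⟩
  · rw [smul_eq_C_mul, smul_eq_C_mul]
    linear_combination (-(C (6⁻¹:ℂ))) * key2 - a * h6
  · rw [smul_eq_C_mul, smul_eq_C_mul]
    linear_combination (-(C (6⁻¹:ℂ))) * keyb - b * h6

lemma mem_cuspN_iff (v : Fin 2 → cuspRing) :
    v ∈ cuspN ↔ ∃ c : cuspRing, c * (X 0 ^ 2 - X 1 ^ 3) = 2 * X 0 * v 0 - 3 * X 1 ^ 2 * v 1 := by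
  rw [cuspN, Submodule.mem_comap, Ideal.mem_span_singleton']
  simp only [LinearMap.sum_apply, LinearMap.add_apply, LinearMap.smul_apply, LinearMap.proj_apply,
    Fin.sum_univ_two, smul_eq_mul, cuspG, cuspF, Matrix.cons_val_zero, Matrix.cons_val_one,
    Matrix.head_cons]
  constructor <;> rintro ⟨c, hc⟩ <;> exact ⟨c, by linear_combination hc⟩

lemma E_mem : (![3 * X 0, 2 * X 1] : Fin 2 → cuspRing) ∈ cuspN := by
  rw [mem_cuspN_iff]
  refine ⟨6, ?_⟩
  simp only [Matrix.cons_val_zero, Matrix.cons_val_one, Matrix.head_cons]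
  ring

lemma H_mem : (![3 * X 0 * X 1, 2 * X 1 ^ 2] : Fin 2 → cuspRing) ∈ cuspN := by
  rw [mem_cuspN_iff]
  refine ⟨6 * X 1, ?_⟩
  simp only [Matrix.cons_val_zero, Matrix.cons_val_one, Matrix.head_cons]
  ring

lemma A_mem : (![cuspF, 0] : Fin 2 → cuspRing) ∈ cuspT :=
  Submodule.subset_span (by simp)

lemma B_mem : (![0, cuspF] : Fin 2 → cuspRing) ∈ cuspT :=
  Submodule.subset_span (by simp)

lemma K_mem : (![cuspG 1, -cuspG 0] : Fin 2 → cuspRing) ∈ cuspT :=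
  Submodule.subset_span (by simp)

lemma xE_mem : (X 0 : cuspRing) • (![3 * X 0, 2 * X 1] : Fin 2 → cuspRing) ∈ cuspT := by
  have : (X 0 : cuspRing) • (![3 * X 0, 2 * X 1] : Fin 2 → cuspRing)
      = (3 : cuspRing) • ![cuspF, 0] + (-X 1 : cuspRing) • ![cuspG 1, -cuspG 0] := by
    funext i
    fin_cases i <;>
      · simp only [Fin.zero_eta, Fin.mk_one, Pi.add_apply, Pi.smul_apply, Matrix.cons_val_zero,
          Matrix.cons_val_one, Matrix.head_cons, smul_eq_mul, cuspF, cuspG]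
        ring
  rw [this]
  exact Submodule.add_mem _ (Submodule.smul_mem _ _ A_mem) (Submodule.smul_mem _ _ K_mem)

lemma y2E_mem : ((X 1 : cuspRing) ^ 2) • (![3 * X 0, 2 * X 1] : Fin 2 → cuspRing) ∈ cuspT := by
  have : ((X 1 : cuspRing) ^ 2) • (![3 * X 0, 2 * X 1] : Fin 2 → cuspRing)
      = (-2 : cuspRing) • ![0, cuspF] + (-X 0 : cuspRing) • ![cuspG 1, -cuspG 0] := by
    funext i
    fin_cases i <;>
      · simp only [Fin.zero_eta, Fin.mk_one, Pi.add_apply, Pi.smul_apply, Matrix.cons_val_zero,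
          Matrix.cons_val_one, Matrix.head_cons, smul_eq_mul, cuspF, cuspG]
        ring
  rw [this]
  exact Submodule.add_mem _ (Submodule.smul_mem _ _ B_mem) (Submodule.smul_mem _ _ K_mem)

lemma indep_core (c0 c1 : ℂ)
    (h : c0 • (![3 * X 0, 2 * X 1] : Fin 2 → cuspRing)
        + c1 • (![3 * X 0 * X 1, 2 * X 1 ^ 2] : Fin 2 → cuspRing) ∈ cuspT) :
    c0 = 0 ∧ c1 = 0 := by
  rw [cuspT, Submodule.mem_span_insert] at h
  obtain ⟨r, z, hz, hv⟩ := h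
  rw [Submodule.mem_span_insert] at hz
  obtain ⟨s, z', hz', rfl⟩ := hz
  rw [Submodule.mem_span_singleton] at hz'
  obtain ⟨t, rfl⟩ := hz'
  have e0 : C c0 * (3 * X 0) + C c1 * (3 * X 0 * X 1)
      = r * cuspF + (s * 0 + t * (-3 * X 1 ^ 2)) := by
    have := congrFun hv 0
    simpa [smul_eq_C_mul, smul_eq_mul, cuspF, cuspG] using this
  rw [show ((3 : cuspRing)) = C (3 : ℂ) from (map_ofNat C 3).symm] at e0
  have d1 := congrArg (fun g => eval (0 : Fin 2 → ℂ) (pderiv 0 g)) e0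
  simp [cuspF, pderiv_mul, pderiv_X, pderiv_C] at d1
  have d2 := congrArg (fun g => eval (0 : Fin 2 → ℂ) (pderiv 1 (pderiv 0 g))) e0
  simp [cuspF, pderiv_mul, pderiv_X, pderiv_C] at d2
  exact ⟨d1, d2⟩

/-- For the cusp `f = x² − y³`, the quotient `N/T` is a `ℂ`-vector space of
dimension `2`, and the classes of `(3x, 2y)` and `(3xy, 2y²)` form a `ℂ`-basis of `N/T`. -/
theorem stmt_4 :
    ∃ (h1 : (![3 * X 0, 2 * X 1] : Fin 2 → cuspRing) ∈ cuspN)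
      (h2 : (![3 * X 0 * X 1, 2 * X 1 ^ 2] : Fin 2 → cuspRing) ∈ cuspN)
      (b : Module.Basis (Fin 2) ℂ (cuspN ⧸ Submodule.comap cuspN.subtype cuspT)),
        b 0 = Submodule.Quotient.mk ⟨![3 * X 0, 2 * X 1], h1⟩ ∧
        b 1 = Submodule.Quotient.mk ⟨![3 * X 0 * X 1, 2 * X 1 ^ 2], h2⟩ ∧
        Module.finrank ℂ (cuspN ⧸ Submodule.comap cuspN.subtype cuspT) = 2 := by
  refine ⟨E_mem, H_mem, ?_⟩
  set T' : Submodule cuspRing cuspN := Submodule.comap cuspN.subtype cuspT with hT'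
  set eE : cuspN := ⟨![3 * X 0, 2 * X 1], E_mem⟩ with heE
  set eH : cuspN := ⟨![3 * X 0 * X 1, 2 * X 1 ^ 2], H_mem⟩ with heH
  set v : Fin 2 → (cuspN ⧸ T') := ![Submodule.Quotient.mk eE, Submodule.Quotient.mk eH] with hv
  have hindep : LinearIndependent ℂ v := by
    rw [Fintype.linearIndependent_iff]
    intro g hg
    rw [Fin.sum_univ_two] at hg
    have hv0 : v 0 = Submodule.Quotient.mk eE := rfl
    have hv1 : v 1 = Submodule.Quotient.mk eH := rfl
    rw [hv0, hv1, ← Submodule.Quotient.mk_smul, ← Submodule.Quotient.mk_smul,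
      ← Submodule.Quotient.mk_add, Submodule.Quotient.mk_eq_zero] at hg
    rw [Submodule.mem_comap] at hg
    have hval : cuspN.subtype (g 0 • eE + g 1 • eH)
        = g 0 • (![3 * X 0, 2 * X 1] : Fin 2 → cuspRing)
          + g 1 • (![3 * X 0 * X 1, 2 * X 1 ^ 2] : Fin 2 → cuspRing) := rfl
    rw [hval] at hg
    obtain ⟨h0, h1⟩ := indep_core _ _ hg
    intro i; fin_cases i <;> assumption
  have hspan : ⊤ ≤ Submodule.span ℂ (Set.range v) := by
    intro q _
    obtain ⟨w, rfl⟩ := Submodule.Quotient.mk_surjective _ q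
    obtain ⟨c, hc⟩ := (mem_cuspN_iff w.val).mp w.2
    obtain ⟨p, qq, hw0, hw1⟩ := decomp (w.val 0) (w.val 1) c hc
    set c0 : ℂ := coeff 0 p with hc0
    set c1 : ℂ := coeff (Finsupp.single 1 1) p with hc1
    have key : Submodule.Quotient.mk w = c0 • v 0 + c1 • v 1 := by
      have hv0 : v 0 = Submodule.Quotient.mk eE := rfl
      have hv1 : v 1 = Submodule.Quotient.mk eH := rfl
      rw [hv0, hv1, ← Submodule.Quotient.mk_smul, ← Submodule.Quotient.mk_smul,
        ← Submodule.Quotient.mk_add]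
      rw [Submodule.Quotient.eq]
      rw [Submodule.mem_comap]
      have hval : cuspN.subtype (w - (c0 • eE + c1 • eH))
          = w.val - (c0 • (![3 * X 0, 2 * X 1] : Fin 2 → cuspRing)
            + c1 • (![3 * X 0 * X 1, 2 * X 1 ^ 2] : Fin 2 → cuspRing)) := rfl
      rw [hval]
      -- decompose
      set p' : cuspRing := p - C c0 - C c1 * X 1 with hp'
      have hvec : w.val - (c0 • (![3 * X 0, 2 * X 1] : Fin 2 → cuspRing)
            + c1 • (![3 * X 0 * X 1, 2 * X 1 ^ 2] : Fin 2 → cuspRing))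
          = p' • (![3 * X 0, 2 * X 1] : Fin 2 → cuspRing)
            + qq • (![cuspG 1, -cuspG 0] : Fin 2 → cuspRing) := by
        funext i
        fin_cases i <;>
          · simp only [Fin.zero_eta, Fin.mk_one, Pi.add_apply, Pi.sub_apply, Pi.smul_apply,
              Matrix.cons_val_zero, Matrix.cons_val_one, Matrix.head_cons, smul_eq_mul,
              smul_eq_C_mul, cuspG, hp']
            first
              | linear_combination hw0
              | linear_combination hw1
      rw [hvec]
      have hcp0 : coeff 0 p' = 0 := by
        simp [hp', ← hc0, coeff_C_mul]
      have hcp1 : coeff (Finsupp.single 1 1) p' = 0 := by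
        simp only [hp', coeff_sub, coeff_C_mul, coeff_X, ← hc1, mul_one, coeff_C, if_true,
          if_neg (show ¬((0 : Fin 2 →₀ ℕ) = Finsupp.single 1 1) by simp [eq_comm, Finsupp.single_eq_zero])]
        ring
      obtain ⟨u, w2, hpu⟩ := memA p' hcp0 hcp1
      refine Submodule.add_mem _ ?_ (Submodule.smul_mem _ _ K_mem)
      rw [hpu, add_smul, mul_smul, mul_smul]
      exact Submodule.add_mem _ (Submodule.smul_mem _ _ xE_mem)
        (Submodule.smul_mem _ _ y2E_mem)
    rw [key]
    exact Submodule.add_mem _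
      (Submodule.smul_mem _ _ (Submodule.subset_span ⟨0, rfl⟩))
      (Submodule.smul_mem _ _ (Submodule.subset_span ⟨1, rfl⟩))
  refine ⟨Module.Basis.mk hindep hspan, ?_, ?_, ?_⟩
  · rw [Module.Basis.mk_apply]; rfl
  · rw [Module.Basis.mk_apply]; rfl
  · rw [Module.finrank_eq_card_basis (Module.Basis.mk hindep hspan)]
    simp
end

section
/- In the polynomial ring ℂ[x, y, z], let f = x³ + y³ + z⁴. Then the ideal quotient ((f, ∂f/∂x, ∂f/∂y) : (∂f/∂z)), i.e., ((x³ + y³ + z⁴, 3x², 3y²) : (4z³)), equals the ideal (x², y², z). -/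
open MvPolynomial

/-- `f = x³ + y³ + z⁴ ∈ ℂ[x, y, z]`, with `x = X 0`, `y = X 1`, `z = X 2`. -/
noncomputable def fU12 : MvPolynomial (Fin 3) ℂ := X 0 ^ 3 + X 1 ^ 3 + X 2 ^ 4

private lemma hp0 : pderiv 0 fU12 = 3 * X 0 ^ 2 := by simp [fU12]
private lemma hp1 : pderiv 1 fU12 = 3 * X 1 ^ 2 := by simp [fU12]
private lemma hp2 : pderiv 2 fU12 = 4 * X 2 ^ 3 := by simp [fU12]

/-- Membership in the monomial ideal `(x², y², z⁴)` in terms of supports. -/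
private lemma mem_M_iff {a : MvPolynomial (Fin 3) ℂ} :
    a ∈ Ideal.span {(X 0 ^ 2 : MvPolynomial (Fin 3) ℂ), X 1 ^ 2, X 2 ^ 4} ↔
      ∀ m ∈ a.support, (2 ≤ m 0 ∨ 2 ≤ m 1 ∨ 4 ≤ m 2) := by
  have h : ({(X 0 ^ 2 : MvPolynomial (Fin 3) ℂ), X 1 ^ 2, X 2 ^ 4} : Set _) =
      (fun s => monomial s (1 : ℂ)) ''
        {Finsupp.single 0 2, Finsupp.single 1 2, Finsupp.single 2 4} := by
    simp [Set.image_insert_eq, X_pow_eq_monomial]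
  rw [h, mem_ideal_span_monomial_image]
  simp [Finsupp.single_le_iff]

/-- Membership in the monomial ideal `(x², y², z)` in terms of supports. -/
private lemma mem_N_iff {a : MvPolynomial (Fin 3) ℂ} :
    a ∈ Ideal.span {(X 0 ^ 2 : MvPolynomial (Fin 3) ℂ), X 1 ^ 2, X 2} ↔
      ∀ m ∈ a.support, (2 ≤ m 0 ∨ 2 ≤ m 1 ∨ 1 ≤ m 2) := by
  have h : ({(X 0 ^ 2 : MvPolynomial (Fin 3) ℂ), X 1 ^ 2, X 2} : Set _) =
      (fun s => monomial s (1 : ℂ)) ''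
        {Finsupp.single 0 2, Finsupp.single 1 2, Finsupp.single 2 1} := by
    have : (X 2 : MvPolynomial (Fin 3) ℂ) = monomial (Finsupp.single 2 1) 1 := rfl
    simp [Set.image_insert_eq, X_pow_eq_monomial, this]
  rw [h, mem_ideal_span_monomial_image]
  simp [Finsupp.single_le_iff]

/-- The Tjurina-type ideal equals the monomial ideal `(x², y², z⁴)`. -/
private lemma hI :
    Ideal.span {fU12, pderiv 0 fU12, pderiv 1 fU12} =
      Ideal.span {(X 0 ^ 2 : MvPolynomial (Fin 3) ℂ), X 1 ^ 2, X 2 ^ 4} := by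
  apply le_antisymm <;> rw [Ideal.span_le]
  · set M := Ideal.span {(X 0 ^ 2 : MvPolynomial (Fin 3) ℂ), X 1 ^ 2, X 2 ^ 4}
    have hx2 : (X 0 ^ 2 : MvPolynomial (Fin 3) ℂ) ∈ M := Ideal.subset_span (by simp)
    have hy2 : (X 1 ^ 2 : MvPolynomial (Fin 3) ℂ) ∈ M := Ideal.subset_span (by simp)
    have hz4 : (X 2 ^ 4 : MvPolynomial (Fin 3) ℂ) ∈ M := Ideal.subset_span (by simp)
    rintro p (rfl | rfl | rfl)
    · have : fU12 = X 0 * X 0 ^ 2 + X 1 * X 1 ^ 2 + X 2 ^ 4 := by unfold fU12; ring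
      rw [this]
      exact add_mem (add_mem (M.mul_mem_left _ hx2) (M.mul_mem_left _ hy2)) hz4
    · rw [hp0]; exact M.mul_mem_left _ hx2
    · rw [hp1]; exact M.mul_mem_left _ hy2
  · set I := Ideal.span {fU12, pderiv 0 fU12, pderiv 1 fU12}
    have hf : fU12 ∈ I := Ideal.subset_span (by simp)
    have h0 : pderiv 0 fU12 ∈ I := Ideal.subset_span (by simp)
    have h1 : pderiv 1 fU12 ∈ I := Ideal.subset_span (by simp)
    have e0 : (X 0 ^ 2 : MvPolynomial (Fin 3) ℂ) = C (1/3) * pderiv 0 fU12 := by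
      rw [hp0, show (3 : MvPolynomial (Fin 3) ℂ) = C 3 from (map_ofNat C 3).symm,
        ← mul_assoc, ← C_mul]
      norm_num
    have e1 : (X 1 ^ 2 : MvPolynomial (Fin 3) ℂ) = C (1/3) * pderiv 1 fU12 := by
      rw [hp1, show (3 : MvPolynomial (Fin 3) ℂ) = C 3 from (map_ofNat C 3).symm,
        ← mul_assoc, ← C_mul]
      norm_num
    rintro p (rfl | rfl | rfl)
    · rw [e0]; exact I.mul_mem_left _ h0
    · rw [e1]; exact I.mul_mem_left _ h1
    · have : (X 2 ^ 4 : MvPolynomial (Fin 3) ℂ) =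
          fU12 - X 0 * (C (1/3) * pderiv 0 fU12) - X 1 * (C (1/3) * pderiv 1 fU12) := by
        rw [← e0, ← e1]; unfold fU12; ring
      rw [this]
      exact sub_mem (sub_mem hf (I.mul_mem_left _ (I.mul_mem_left _ h0)))
        (I.mul_mem_left _ (I.mul_mem_left _ h1))

/-- The support of `a · 4z³` is the support of `a` shifted by `z³`. -/
private lemma support_mul_4z3 (a : MvPolynomial (Fin 3) ℂ) (m : Fin 3 →₀ ℕ) :
    m ∈ (a * (4 * X 2 ^ 3)).support ↔
      ∃ m' ∈ a.support,
        m' + Finsupp.single 2 1 + Finsupp.single 2 1 + Finsupp.single 2 1 = m := by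
  have h : a * (4 * X 2 ^ 3) = (4 : ℂ) • a * X 2 * X 2 * X 2 := by
    rw [smul_eq_C_mul, map_ofNat]; ring
  rw [h, support_mul_X, support_mul_X, support_mul_X,
    support_smul_eq (by norm_num : (4 : ℂ) ≠ 0)]
  simp [Finset.mem_map, Function.Embedding.trans, addRightEmbedding]

/-- For `f = x³ + y³ + z⁴` in `ℂ[x, y, z]`, the ideal quotient
`((f, ∂f/∂x, ∂f/∂y) : (∂f/∂z))` equals the ideal `(x², y², z)`. -/
theorem stmt_8 :
    (Ideal.span {fU12, pderiv 0 fU12, pderiv 1 fU12}).colon (Ideal.span {pderiv 2 fU12}) =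
      Ideal.span {(X 0 ^ 2 : MvPolynomial (Fin 3) ℂ), X 1 ^ 2, X 2} := by
  ext a
  rw [Ideal.mem_colon_span_singleton, hI, hp2, mem_M_iff, mem_N_iff]
  constructor
  · intro h m hm
    have := h (m + Finsupp.single 2 1 + Finsupp.single 2 1 + Finsupp.single 2 1)
      ((support_mul_4z3 a _).2 ⟨m, hm, rfl⟩)
    simpa [Finsupp.single_apply] using this
  · intro h m hm
    obtain ⟨m', hm', rfl⟩ := (support_mul_4z3 a m).1 hm
    have := h m' hm'
    simpa [Finsupp.single_apply] using this
end

section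
/- For every t ∈ ℂ, let f = x³ + y⁷ + t·x·y⁶ ∈ ℂ[x, y] and let R be the localization of ℂ[x, y] at the maximal ideal (x, y). Then the image of f in R belongs to the ideal of R generated by the images of ∂f/∂x = 3x² + ty⁶ and ∂f/∂y = 7y⁶ + 6txy⁵. -/
open MvPolynomial

/-- For every `t ∈ ℂ`, with `f = x³ + y⁷ + t·x·y⁶ ∈ ℂ[x, y]` and `R` the
localization of `ℂ[x, y]` at the maximal ideal `(x, y)`, the image of `f` in `R` belongs to
the ideal of `R` generated by the images of `∂f/∂x` and `∂f/∂y`. -/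
theorem stmt_12 (t : ℂ) (f : MvPolynomial (Fin 2) ℂ)
    (hf : f = X 0 ^ 3 + X 1 ^ 7 + C t * X 0 * X 1 ^ 6)
    (hprime : (Ideal.span {X 0, X 1} : Ideal (MvPolynomial (Fin 2) ℂ)).IsPrime) :
    algebraMap (MvPolynomial (Fin 2) ℂ)
        (Localization ((Ideal.span {X 0, X 1} : Ideal (MvPolynomial (Fin 2) ℂ)).primeCompl
          (hp := hprime))) f ∈
      Ideal.span
        {algebraMap (MvPolynomial (Fin 2) ℂ)
            (Localization ((Ideal.span {X 0, X 1} : Ideal (MvPolynomial (Fin 2) ℂ)).primeCompl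
              (hp := hprime))) (pderiv 0 f),
          algebraMap (MvPolynomial (Fin 2) ℂ)
            (Localization ((Ideal.span {X 0, X 1} : Ideal (MvPolynomial (Fin 2) ℂ)).primeCompl
              (hp := hprime))) (pderiv 1 f)} := by
  set S := (Ideal.span {X 0, X 1} : Ideal (MvPolynomial (Fin 2) ℂ)).primeCompl (hp := hprime)
  set φ := algebraMap (MvPolynomial (Fin 2) ℂ) (Localization S)
  -- the unit multiplier
  set w : MvPolynomial (Fin 2) ℂ := C 147 + C (36 * t ^ 3) * X 1 ^ 4 with hw
  set u : MvPolynomial (Fin 2) ℂ := C 21 * w with hu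
  set d₁ : MvPolynomial (Fin 2) ℂ := C 7 * X 0 * w + C (168 * t ^ 2) * X 1 ^ 5 with hd1
  set d₂ : MvPolynomial (Fin 2) ℂ :=
    C 3 * X 1 * w - C (84 * t) * X 0 - C (24 * t ^ 3) * X 1 ^ 5 with hd2
  have hfx : pderiv 0 f = C 3 * X 0 ^ 2 + C t * X 1 ^ 6 := by
    subst hf
    simp [pderiv_X, map_ofNat]
    ring
  have hfy : pderiv 1 f = C 7 * X 1 ^ 6 + C (6 * t) * X 0 * X 1 ^ 5 := by
    subst hf
    simp [pderiv_X, map_ofNat]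
    ring
  -- key polynomial identity
  have key : d₁ * pderiv 0 f + d₂ * pderiv 1 f = u * f := by
    rw [hfx, hfy, hf, hd1, hd2, hu, hw]
    simp only [map_mul, map_add, map_ofNat, map_pow]
    push_cast
    ring
  -- u is in the prime complement
  have huS : u ∈ S := by
    intro hmem
    have hle : (Ideal.span {X 0, X 1} : Ideal (MvPolynomial (Fin 2) ℂ)) ≤
        RingHom.ker (constantCoeff : MvPolynomial (Fin 2) ℂ →+* ℂ) := by
      rw [Ideal.span_le]
      rintro p (rfl | rfl) <;> simp [RingHom.mem_ker]
    have := hle hmem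
    rw [RingHom.mem_ker] at this
    simp [hu, hw] at this
  have hunit : IsUnit (φ u) := IsLocalization.map_units (Localization S) ⟨u, huS⟩
  obtain ⟨v, hv⟩ := hunit
  rw [Ideal.mem_span_pair]
  refine ⟨↑v⁻¹ * φ d₁, ↑v⁻¹ * φ d₂, ?_⟩
  have : (↑v⁻¹ : Localization S) * φ d₁ * φ (pderiv 0 f)
      + ↑v⁻¹ * φ d₂ * φ (pderiv 1 f)
      = ↑v⁻¹ * φ (d₁ * pderiv 0 f + d₂ * pderiv 1 f) := by
    simp only [map_add, map_mul]; ring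
  rw [this, key, map_mul, ← mul_assoc, ← hv, Units.inv_mul, one_mul]
end
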